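/- Let Z(t), t∈T, take values in [-∞,∞) with E[exp(Z(t))] = 1 for all t and P(Z(h) > -∞) ∈ (0,1] for h∈T. Define Ξ_h Z(t) = J_h Θ_h(t) + (1−J_h)[W_h(t) − V_h^{[h]}(h)] − ln P(J_h = 1). Then for every h∈T the associated max-stable processes satisfy ζ_Z =fdd ζ_{Ξ_h Z}. Moreover, for any probability measure μ on T, ζ_Z =fdd η, where η(t) = max_{i≥1}(P_i + Ξ_{T_i} Z_i(t)) and (P_i, T_i) are the points of a Poisson point process on ℝ×T with intensity e^{-p}dp·μ(dt) independent of the i.i.d. copies Z_i of Z. -/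

import Mathlib

open MeasureTheory ProbabilityTheory Filter
open scoped ENNReal NNReal

noncomputable section

/-- `e^x` for `x ∈ [-∞,∞]`, as an extended nonnegative real. -/
def expE (x : EReal) : ℝ≥0∞ :=
  if x = ⊤ then ⊤ else if x = ⊥ then 0 else ENNReal.ofReal (Real.exp x.toReal)

/-- `e^{-L}` for `L ∈ [0,∞]`. -/
def expNeg (L : ℝ≥0∞) : ℝ≥0∞ :=
  if L = ⊤ then 0 else ENNReal.ofReal (Real.exp (-L.toReal))

/-- natural logarithm, from `[0,∞]` to `[-∞,∞]`. -/
def logE (L : ℝ≥0∞) : EReal :=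
  if L = 0 then ⊥ else if L = ⊤ then ⊤ else ((Real.log L.toReal : ℝ) : EReal)

/-- Equality of all finite-dimensional distributions of two processes. -/
def SameFDD {T E Ω₁ Ω₂ : Type*} [MeasurableSpace Ω₁] [MeasurableSpace Ω₂] [MeasurableSpace E]
    (μ₁ : Measure Ω₁) (X : T → Ω₁ → E) (μ₂ : Measure Ω₂) (Y : T → Ω₂ → E) : Prop :=
  ∀ (n : ℕ) (t : Fin n → T),
    Measure.map (fun ω i => X (t i) ω) μ₁ = Measure.map (fun ω i => Y (t i) ω) μ₂

/-- `ζ` is (a version of) the max-stable process associated with the spectral process `Z`,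
i.e. its finite-dimensional distributions are the ones of the de Haan representation
`ζ_Z(t) = max_{i ≥ 1} (P_i + Z_i(t))` built from a Poisson point process `Σ ε_{P_i}` on `ℝ`
with intensity `e^{-x} dx`, independent of the i.i.d. copies `Z_i` of `Z`; equivalently
`P(ζ(t₁) ≤ x₁, …, ζ(tₙ) ≤ xₙ) = exp( - E[ max_i e^{Z(t_i) - x_i} ] )`. -/
def IsAssocMaxStable {T Ω Ω' : Type*} [MeasurableSpace Ω] [MeasurableSpace Ω']
    (μ' : Measure Ω') (ζ : T → Ω' → ℝ) (μ : Measure Ω) (Z : T → Ω → EReal) : Prop :=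
  ∀ (n : ℕ) (t : Fin n → T) (x : Fin n → ℝ),
    μ' {ω | ∀ i, ζ (t i) ω ≤ x i}
      = expNeg (∫⁻ ω, ⨆ i, expE (Z (t i) ω - (x i : EReal)) ∂μ)

/-- The law of the path `ω ↦ Z(·)(ω)` on the product σ-field. -/
def pathLaw {T Ω : Type*} [MeasurableSpace Ω] (μ : Measure Ω) (Z : T → Ω → EReal) :
    Measure (T → EReal) := Measure.map (fun ω t => Z t ω) μ

/-- Law of the exponentially tilted process `Z^{[h]}`:
`P(Z^{[h]} ∈ A) = E[ e^{Z(h)} 1_{Z ∈ A} ]`.  (When `P(Z(h) = -∞) > 0` this is the law of the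
tilt `V_h^{[h]}` of the conditional process `V_h = Z | (Z(h) > -∞)` by
`V_h(h) - ln E[e^{V_h(h)}]`, since the density `e^{f(h)}` vanishes on `{f : f(h) = -∞}`.) -/
def tiltLaw {T Ω : Type*} [MeasurableSpace Ω] (μ : Measure Ω) (Z : T → Ω → EReal) (h : T) :
    Measure (T → EReal) := (pathLaw μ Z).withDensity fun f => expE (f h)

/-- Law of the recentred tilted process `Θ_h = Ξ_h Z`, `Θ_h(t) = Z^{[h]}(t) - Z^{[h]}(h)`
(equal to `Θ_h(t) = V_h^{[h]}(t) - V_h^{[h]}(h)` in the general case). -/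
def ThetaLaw {T Ω : Type*} [MeasurableSpace Ω] (μ : Measure Ω) (Z : T → Ω → EReal) (h : T) :
    Measure (T → EReal) := Measure.map (fun f t => f t - f h) (tiltLaw μ Z h)

@[simp] lemma expE_top : expE ⊤ = ⊤ := rfl
@[simp] lemma expE_bot : expE ⊥ = 0 := rfl
@[simp] lemma expE_coe (r : ℝ) : expE (r : EReal) = ENNReal.ofReal (Real.exp r) := by
  simp [expE]

lemma measurable_expE : Measurable expE := by
  unfold expE
  refine Measurable.ite (measurableSet_singleton _) measurable_const ?_
  refine Measurable.ite (measurableSet_singleton _) measurable_const ?_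
  exact ENNReal.measurable_ofReal.comp (Real.measurable_exp.comp measurable_ereal_toReal)

lemma expE_sub (a b : EReal) : expE (a - b) = expE a * expE (-b) := by
  induction a using EReal.rec <;> induction b using EReal.rec <;>
    simp_all [sub_eq_add_neg, ← EReal.coe_neg, ← EReal.coe_add,
      Real.exp_pos, Real.exp_add,
      ENNReal.top_mul, ENNReal.mul_top, ENNReal.ofReal_pos, (Real.exp_pos _).ne',
      ENNReal.ofReal_mul (Real.exp_nonneg _)]

lemma expE_sub_coe (a : EReal) (r : ℝ) :
    expE (a - (r : EReal)) = expE a * ENNReal.ofReal (Real.exp (-r)) := by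
  rw [expE_sub, ← EReal.coe_neg, expE_coe]

lemma expE_mul_expE_neg {b : EReal} (hb : b ≠ ⊤) :
    expE b * expE (-b) = if b = ⊥ then 0 else 1 := by
  induction b using EReal.rec with
  | bot => simp
  | coe r => simp [← EReal.coe_neg, ← ENNReal.ofReal_mul (Real.exp_nonneg _),
      ← Real.exp_add]
  | top => simp at hb

lemma main_identity {T Ω Ω'' : Type*}
    [MeasurableSpace T] [MeasurableSpace Ω] [MeasurableSpace Ω'']
    (μ : Measure Ω) (μ'' : Measure Ω'')
    [IsProbabilityMeasure μ] [IsProbabilityMeasure μ'']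
    (Z : T → Ω → EReal) (hZm : ∀ t, Measurable (Z t))
    (hZne : ∀ t, ∀ᵐ ω ∂μ, Z t ω ≠ ⊤)
    (hp : ∀ h : T, 0 < μ {ω | Z h ω ≠ ⊥})
    (J : T → Ω'' → Bool) (Vt : T → T → Ω'' → EReal) (W : T → T → Ω'' → EReal)
    (hJm : ∀ h, Measurable (J h)) (hVm : ∀ h t, Measurable (Vt h t))
    (hWm : ∀ h t, Measurable (W h t))
    (hJ : ∀ h, μ'' {ω | J h ω = true} = μ {ω | Z h ω ≠ ⊥})
    (hV : ∀ h, Measure.map (fun ω t => Vt h t ω) μ'' = tiltLaw μ Z h)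
    (hW : ∀ h, (pathLaw μ Z).restrict {f | f h = ⊥}
        = μ {ω | Z h ω = ⊥} • Measure.map (fun ω t => W h t ω) μ'')
    (hindep : ∀ h, ProbabilityTheory.IndepFun (J h)
        (fun ω => ((fun t => Vt h t ω), fun t => W h t ω)) μ'')
    (hVW : ∀ h, ProbabilityTheory.IndepFun (fun ω t => Vt h t ω) (fun ω t => W h t ω) μ'')
    (Xi : T → T → Ω'' → EReal)
    (hXi : ∀ h t ω, Xi h t ω =
      (if J h ω then Vt h t ω - Vt h h ω else W h t ω - Vt h h ω)
        - ((Real.log (μ {ω' | Z h ω' ≠ ⊥}).toReal : ℝ) : EReal))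
    (h : T) (n : ℕ) (t : Fin n → T) (x : Fin n → ℝ) :
    ∫⁻ ω, ⨆ i, expE (Xi h (t i) ω - (x i : EReal)) ∂μ''
      = ∫⁻ ω, ⨆ i, expE (Z (t i) ω - (x i : EReal)) ∂μ := by
  classical
  set p : ℝ≥0∞ := μ {ω | Z h ω ≠ ⊥} with hpdef
  have p0 : p ≠ 0 := (hp h).ne'
  have p1 : p ≤ 1 := prob_le_one
  have pt : p ≠ ⊤ := (lt_of_le_of_lt p1 ENNReal.one_lt_top).ne
  have ptR : 0 < p.toReal := ENNReal.toReal_pos p0 pt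
  set L : ℝ := Real.log p.toReal with hLdef
  set cL : ℝ≥0∞ := ENNReal.ofReal (Real.exp (-L)) with hcLdef
  have hcLp : cL = p⁻¹ := by
    rw [hcLdef, hLdef, Real.exp_neg, Real.exp_log ptR,
      ENNReal.ofReal_inv_of_pos ptR, ENNReal.ofReal_toReal pt]
  have cLt : cL ≠ ⊤ := ENNReal.ofReal_ne_top
  set cx : Fin n → ℝ≥0∞ := fun i => ENNReal.ofReal (Real.exp (-(x i))) with hcxdef
  set S : (T → EReal) → ℝ≥0∞ := fun f => ⨆ i, expE (f (t i)) * cx i with hSdef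
  have hSm : Measurable S :=
    Measurable.iSup fun i =>
      (measurable_expE.comp (measurable_pi_apply (t i))).mul measurable_const
  have hSeq : ∀ f : T → EReal, (⨆ i, expE (f (t i) - (x i : EReal))) = S f := by
    intro f
    exact iSup_congr fun i => expE_sub_coe _ _
  -- path law facts
  have Zpm : Measurable (fun ω (s : T) => Z s ω) := measurable_pi_lambda _ hZm
  have evh : Measurable fun f : T → EReal => f h := measurable_pi_apply h
  have hsT : MeasurableSet {f : T → EReal | f h = ⊤} := evh (measurableSet_singleton ⊤)
  have hsB : MeasurableSet {f : T → EReal | f h = ⊥} := evh (measurableSet_singleton ⊥)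
  have hsZB : MeasurableSet {ω | Z h ω = ⊥} := (hZm h) (measurableSet_singleton ⊥)
  have pl_top : (pathLaw μ Z) {f | f h = ⊤} = 0 := by
    rw [pathLaw, Measure.map_apply Zpm hsT]
    have := hZne h
    rw [ae_iff] at this
    simpa using this
  have pl_ae : ∀ᵐ f ∂(pathLaw μ Z), f h ≠ ⊤ := by
    rw [ae_iff]
    simpa using pl_top
  have hμb : μ {ω | Z h ω = ⊥} = 1 - p := by
    have h1 : p = μ ({ω | Z h ω = ⊥}ᶜ) := rfl
    rw [h1, prob_compl_eq_one_sub hsZB,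
      ENNReal.sub_sub_cancel ENNReal.one_ne_top prob_le_one]
  have pl_nb : (pathLaw μ Z) ({f | f h = ⊥}ᶜ) = p := by
    rw [pathLaw, Measure.map_apply Zpm hsB.compl]
    rfl
  -- tilt law integration
  have tilt_int : ∀ g : (T → EReal) → ℝ≥0∞, Measurable g →
      ∫⁻ f, g f ∂(tiltLaw μ Z h) = ∫⁻ f, expE (f h) * g f ∂(pathLaw μ Z) := by
    intro g hg
    have hd : Measurable fun f : T → EReal => expE (f h) := measurable_expE.comp evh
    rw [tiltLaw, lintegral_withDensity_eq_lintegral_mul _ hd hg]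
    rfl
  have hVpm : Measurable (fun ω (s : T) => Vt h s ω) := measurable_pi_lambda _ (hVm h)
  have hWpm : Measurable (fun ω (s : T) => W h s ω) := measurable_pi_lambda _ (hWm h)
  have hnegVm : Measurable fun ω => expE (-(Vt h h ω)) :=
    measurable_expE.comp ((continuous_neg : Continuous fun a : EReal => -a).measurable.comp (hVm h h))
  -- the two branch functions
  set A : Ω'' → ℝ≥0∞ := fun ω => ⨆ i, expE (Vt h (t i) ω) * expE (-(Vt h h ω)) * cx i
    with hAdef
  set B : Ω'' → ℝ≥0∞ := fun ω => ⨆ i, expE (W h (t i) ω) * expE (-(Vt h h ω)) * cx i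
    with hBdef
  have hAm : Measurable A := Measurable.iSup fun i =>
    ((measurable_expE.comp (hVm h (t i))).mul hnegVm).mul measurable_const
  have hBm : Measurable B := Measurable.iSup fun i =>
    ((measurable_expE.comp (hWm h (t i))).mul hnegVm).mul measurable_const
  -- pointwise rewriting of the integrand on Ω''
  have point : ∀ ω, (⨆ i, expE (Xi h (t i) ω - (x i : EReal)))
      = cL * (if J h ω then A ω else B ω) := by
    intro ω
    have key : ∀ i, expE (Xi h (t i) ω - (x i : EReal))
        = cL * ((if J h ω then expE (Vt h (t i) ω) * expE (-(Vt h h ω))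
            else expE (W h (t i) ω) * expE (-(Vt h h ω))) * cx i) := by
      intro i
      rw [expE_sub_coe, hXi, expE_sub_coe, ← hpdef, ← hLdef]
      rw [apply_ite expE, expE_sub, expE_sub]
      ring
    by_cases hJω : J h ω
    · simp only [key, if_pos hJω, hAdef, ENNReal.mul_iSup]
    · simp only [key, if_neg hJω, hBdef, ENNReal.mul_iSup]
  -- split the integral along J
  have split : ∫⁻ ω, ⨆ i, expE (Xi h (t i) ω - (x i : EReal)) ∂μ''
      = cL * ((∫⁻ ω, (if J h ω then (1:ℝ≥0∞) else 0) * A ω ∂μ'')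
          + ∫⁻ ω, (if J h ω then (0:ℝ≥0∞) else 1) * B ω ∂μ'') := by
    rw [lintegral_congr point, lintegral_const_mul' _ _ cLt]
    congr 1
    rw [← lintegral_add_left]
    · exact lintegral_congr fun ω => by by_cases hJω : J h ω <;> simp [hJω]
    · exact Measurable.mul
        (Measurable.ite ((hJm h) (measurableSet_singleton true)) measurable_const
          measurable_const) hAm
  -- independence of J and (V, W)
  have hJtrue : MeasurableSet {ω | J h ω = true} := (hJm h) (measurableSet_singleton true)
  have indJA : ∫⁻ ω, (if J h ω then (1:ℝ≥0∞) else 0) * A ω ∂μ''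
      = p * ∫⁻ ω, A ω ∂μ'' := by
    have hind : IndepFun (fun ω => if J h ω then (1:ℝ≥0∞) else 0) A μ'' := by
      have := (hindep h).comp (φ := fun b : Bool => if b then (1:ℝ≥0∞) else 0)
        (ψ := fun q : (T → EReal) × (T → EReal) =>
          ⨆ i, expE (q.1 (t i)) * expE (-(q.1 h)) * cx i)
        Measurable.of_discrete
        (Measurable.iSup fun i =>
          ((measurable_expE.comp ((measurable_pi_apply (t i)).comp measurable_fst)).mul
            (measurable_expE.comp
              ((continuous_neg : Continuous fun a : EReal => -a).measurable.comp
                ((measurable_pi_apply h).comp measurable_fst)))).mul measurable_const)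
      exact this
    have := lintegral_mul_eq_lintegral_mul_lintegral_of_indepFun''
      (Measurable.ite hJtrue measurable_const measurable_const).aemeasurable hAm.aemeasurable hind
    rw [this]
    congr 1
    have hie : (fun ω => if J h ω then (1:ℝ≥0∞) else 0)
        = Set.indicator {ω | J h ω = true} (1 : Ω'' → ℝ≥0∞) := by
      ext ω; by_cases hc : J h ω <;> simp [hc, Set.indicator]
    rw [hie, lintegral_indicator_one hJtrue, hJ h]
  have indJB : ∫⁻ ω, (if J h ω then (0:ℝ≥0∞) else 1) * B ω ∂μ''
      = (1 - p) * ∫⁻ ω, B ω ∂μ'' := by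
    have hind : IndepFun (fun ω => if J h ω then (0:ℝ≥0∞) else 1) B μ'' := by
      have := (hindep h).comp (φ := fun b : Bool => if b then (0:ℝ≥0∞) else 1)
        (ψ := fun q : (T → EReal) × (T → EReal) =>
          ⨆ i, expE (q.2 (t i)) * expE (-(q.1 h)) * cx i)
        Measurable.of_discrete
        (Measurable.iSup fun i =>
          ((measurable_expE.comp ((measurable_pi_apply (t i)).comp measurable_snd)).mul
            (measurable_expE.comp
              ((continuous_neg : Continuous fun a : EReal => -a).measurable.comp
                ((measurable_pi_apply h).comp measurable_fst)))).mul measurable_const)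
      exact this
    have := lintegral_mul_eq_lintegral_mul_lintegral_of_indepFun''
      (Measurable.ite hJtrue measurable_const measurable_const).aemeasurable hBm.aemeasurable hind
    rw [this]
    congr 1
    have hie : (fun ω => if J h ω then (0:ℝ≥0∞) else 1)
        = Set.indicator ({ω | J h ω = true}ᶜ) (1 : Ω'' → ℝ≥0∞) := by
      ext ω; by_cases hc : J h ω <;> simp [hc, Set.indicator]
    rw [hie, lintegral_indicator_one hJtrue.compl, prob_compl_eq_one_sub hJtrue, hJ h]
  -- computation of ∫ A
  have hnegpm : Measurable fun f : T → EReal => expE (-(f h)) :=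
    measurable_expE.comp
      ((continuous_neg : Continuous fun a : EReal => -a).measurable.comp evh)
  have intA : ∫⁻ ω, A ω ∂μ'' = ∫⁻ f in {f : T → EReal | f h = ⊥}ᶜ, S f ∂(pathLaw μ Z) := by
    set gA : (T → EReal) → ℝ≥0∞ := fun f => ⨆ i, expE (f (t i)) * expE (-(f h)) * cx i
      with hgAdef
    have hgAm : Measurable gA := Measurable.iSup fun i =>
      ((measurable_expE.comp (measurable_pi_apply (t i))).mul hnegpm).mul measurable_const
    have h1 : ∫⁻ ω, A ω ∂μ'' = ∫⁻ f, gA f ∂(tiltLaw μ Z h) := by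
      rw [← hV h, lintegral_map hgAm hVpm]
    rw [h1, tilt_int gA hgAm, ← lintegral_indicator hsB.compl]
    refine lintegral_congr_ae (pl_ae.mono fun f hf => ?_)
    show expE (f h) * gA f = Set.indicator ({f : T → EReal | f h = ⊥}ᶜ) S f
    by_cases hb : f h = ⊥
    · have : f ∉ ({f : T → EReal | f h = ⊥}ᶜ) := by simp [hb]
      rw [Set.indicator_of_notMem this, hb]
      simp
    · have h1 : expE (f h) * expE (-(f h)) = 1 := by
        rw [expE_mul_expE_neg hf, if_neg hb]
      have h2 : expE (f h) * gA f = S f := by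
        rw [hgAdef, hSdef]
        simp only []
        rw [ENNReal.mul_iSup]
        refine iSup_congr fun i => ?_
        calc expE (f h) * (expE (f (t i)) * expE (-(f h)) * cx i)
            = expE (f h) * expE (-(f h)) * (expE (f (t i)) * cx i) := by ring
          _ = expE (f (t i)) * cx i := by rw [h1, one_mul]
      have hmem : f ∈ ({f : T → EReal | f h = ⊥}ᶜ) := hb
      rw [h2, Set.indicator_of_mem hmem]
  -- computation of ∫ B
  have intB : ∫⁻ ω, B ω ∂μ''
      = p * ∫⁻ f, S f ∂(Measure.map (fun ω (s : T) => W h s ω) μ'') := by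
    have hBeq : ∀ ω, B ω = expE (-(Vt h h ω)) * S (fun s => W h s ω) := by
      intro ω
      rw [hBdef, hSdef]
      simp only []
      rw [ENNReal.mul_iSup]
      exact iSup_congr fun i => by ring
    rw [lintegral_congr hBeq]
    have hind : IndepFun (fun ω => expE (-(Vt h h ω)))
        (fun ω => S (fun s => W h s ω)) μ'' := by
      have := (hVW h).comp (φ := fun f : T → EReal => expE (-(f h))) (ψ := S) hnegpm hSm
      exact this
    have hGm : Measurable fun ω => S (fun s => W h s ω) := hSm.comp hWpm
    rw [lintegral_mul_eq_lintegral_mul_lintegral_of_indepFun'' hnegVm.aemeasurable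
      hGm.aemeasurable hind]
    congr 1
    · have h1 : ∫⁻ ω, expE (-(Vt h h ω)) ∂μ'' = ∫⁻ f, expE (-(f h)) ∂(tiltLaw μ Z h) := by
        rw [← hV h, lintegral_map hnegpm hVpm]
      rw [h1, tilt_int _ hnegpm]
      have h2 : ∫⁻ f, expE (f h) * expE (-(f h)) ∂(pathLaw μ Z)
          = ∫⁻ f, Set.indicator ({f : T → EReal | f h = ⊥}ᶜ)
              (1 : (T → EReal) → ℝ≥0∞) f ∂(pathLaw μ Z) := by
        refine lintegral_congr_ae (pl_ae.mono fun f hf => ?_)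
        show expE (f h) * expE (-(f h)) = Set.indicator ({f : T → EReal | f h = ⊥}ᶜ)
          (1 : (T → EReal) → ℝ≥0∞) f
        rw [expE_mul_expE_neg hf]
        by_cases hb : f h = ⊥
        · rw [if_pos hb, Set.indicator_of_notMem (by simp [hb])]
        · have hmem : f ∈ ({f : T → EReal | f h = ⊥}ᶜ) := hb
          rw [if_neg hb, Set.indicator_of_mem hmem]
          rfl
      rw [h2, lintegral_indicator_one hsB.compl, pl_nb]
    · exact (lintegral_map hSm hWpm).symm
  have intW : (1 - p) * ∫⁻ f, S f ∂(Measure.map (fun ω (s : T) => W h s ω) μ'')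
      = ∫⁻ f in {f : T → EReal | f h = ⊥}, S f ∂(pathLaw μ Z) := by
    rw [← smul_eq_mul, ← lintegral_smul_measure, ← hμb, ← hW h]
  -- assemble everything
  have hR : ∫⁻ ω, ⨆ i, expE (Z (t i) ω - (x i : EReal)) ∂μ
      = ∫⁻ f, S f ∂(pathLaw μ Z) := by
    rw [pathLaw, lintegral_map hSm Zpm]
    exact lintegral_congr fun ω => hSeq (fun s => Z s ω)
  rw [split, indJA, indJB, intA, intB, hR]
  conv_rhs => rw [← lintegral_add_compl S hsB]
  rw [← intW, hcLp]
  set IA := ∫⁻ f in {f : T → EReal | f h = ⊥}ᶜ, S f ∂(pathLaw μ Z) with hIA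
  set IW := ∫⁻ f, S f ∂(Measure.map (fun ω (s : T) => W h s ω) μ'') with hIW
  set q := 1 - p with hq
  have hone : p⁻¹ * p = 1 := ENNReal.inv_mul_cancel p0 pt
  calc p⁻¹ * (p * IA + q * (p * IW))
      = (p⁻¹ * p) * IA + (p⁻¹ * p) * (q * IW) := by ring
    _ = q * IW + IA := by rw [hone]; ring

/-- Lemma 2: general spectral processes.
For `Z` with values in `[-∞,∞)`, `E[e^{Z(t)}] = 1` and `p_h = P(Z(h) > -∞) ∈ (0,1]`, write
`Z =fdd J_h V_h + (1-J_h) W_h` and define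
`Ξ_h Z(t) = J_h Θ_h(t) + (1-J_h)[W_h(t) - V_h^{[h]}(h)] - ln p_h` with
`Θ_h(t) = V_h^{[h]}(t) - V_h^{[h]}(h)`.  Then `ζ_Z =fdd ζ_{Ξ_h Z}` for every `h`, and for any
probability measure `ν` on `T`, `ζ_Z =fdd η` with `η(t) = max_i (P_i + Ξ_{T_i} Z_i(t))`, where
`(P_i, T_i)` is a Poisson point process on `ℝ × T` with intensity `e^{-p} dp ⋅ ν(dt)` (the
fdd's of `η` are `exp(-∫ E[max_i e^{Ξ_h Z(t_i) - x_i}] ν(dh))`). -/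
theorem statement_7 {T Ω Ω' Ω'' : Type*}
    [MeasurableSpace T] [MeasurableSpace Ω] [MeasurableSpace Ω'] [MeasurableSpace Ω'']
    (μ : Measure Ω) (μ' : Measure Ω') (μ'' : Measure Ω'')
    [IsProbabilityMeasure μ] [IsProbabilityMeasure μ'] [IsProbabilityMeasure μ'']
    (Z : T → Ω → EReal) (hZm : ∀ t, Measurable (Z t))
    (hZne : ∀ t, ∀ᵐ ω ∂μ, Z t ω ≠ ⊤)
    (hZexp : ∀ t, ∫⁻ ω, expE (Z t ω) ∂μ = 1)
    (hp : ∀ h : T, 0 < μ {ω | Z h ω ≠ ⊥})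
    (ζ : T → Ω' → ℝ) (hζ : IsAssocMaxStable μ' ζ μ Z)
    -- decomposition data, for each `h`: a Bernoulli indicator `J h` with success probability
    -- `p_h`, the tilted process `Vt h = V_h^{[h]}`, and the degenerate part `W h = W_h`,
    -- mutually independent
    (J : T → Ω'' → Bool) (Vt : T → T → Ω'' → EReal) (W : T → T → Ω'' → EReal)
    (hJm : ∀ h, Measurable (J h)) (hVm : ∀ h t, Measurable (Vt h t))
    (hWm : ∀ h t, Measurable (W h t))
    (hJ : ∀ h, μ'' {ω | J h ω = true} = μ {ω | Z h ω ≠ ⊥})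
    (hV : ∀ h, Measure.map (fun ω t => Vt h t ω) μ'' = tiltLaw μ Z h)
    (hW : ∀ h, (pathLaw μ Z).restrict {f | f h = ⊥}
        = μ {ω | Z h ω = ⊥} • Measure.map (fun ω t => W h t ω) μ'')
    (hWbot : ∀ h, ∀ᵐ ω ∂μ'', W h h ω = ⊥)
    (hindep : ∀ h, ProbabilityTheory.IndepFun (J h)
        (fun ω => ((fun t => Vt h t ω), fun t => W h t ω)) μ'')
    (hVW : ∀ h, ProbabilityTheory.IndepFun (fun ω t => Vt h t ω) (fun ω t => W h t ω) μ'')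
    -- the tilted spectral process `Ξ_h Z`
    (Xi : T → T → Ω'' → EReal)
    (hXi : ∀ h t ω, Xi h t ω =
      (if J h ω then Vt h t ω - Vt h h ω else W h t ω - Vt h h ω)
        - ((Real.log (μ {ω' | Z h ω' ≠ ⊥}).toReal : ℝ) : EReal)) :
    (∀ h : T, IsAssocMaxStable μ' ζ μ'' (Xi h)) ∧
    (∀ ν : Measure T, IsProbabilityMeasure ν →
      ∀ (n : ℕ) (t : Fin n → T) (x : Fin n → ℝ),
        μ' {ω | ∀ i, ζ (t i) ω ≤ x i}
          = expNeg (∫⁻ h, ∫⁻ ω, ⨆ i, expE (Xi h (t i) ω - (x i : EReal)) ∂μ'' ∂ν)) := by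
  refine ⟨fun h n t x => ?_, fun ν hν n t x => ?_⟩
  · rw [hζ n t x]
    congr 1
    exact (main_identity μ μ'' Z hZm hZne hp J Vt W hJm hVm hWm hJ hV hW hindep hVW
      Xi hXi h n t x).symm
  · rw [hζ n t x]
    congr 1
    symm
    rw [lintegral_congr fun h => main_identity μ μ'' Z hZm hZne hp J Vt W hJm hVm hWm hJ hV hW
      hindep hVW Xi hXi h n t x]
    rw [lintegral_const, measure_univ, mul_one]

end
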